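/- The map h(x) = ((4-|x|²)/(|x|²+4x₂+4), 4x₁/(|x|²+4x₂+4)) is an isometry from the Finsler–Poincaré upper half plane (H, F_H) to the Finsler–Poincaré disk (D, F_P): for all x ∈ H and v ∈ ℝ², F_H(x,v) = F_P(h(x), Dh_x(v)). -/

import Mathlib

noncomputable section

/-- The Euclidean plane. -/
abbrev E2 := EuclideanSpace ℝ (Fin 2)

/-- The open unit disk. -/
def Dset : Set E2 := {x | ‖x‖ < 1}

/-- The upper half plane. -/
def Hset : Set E2 := {x | x 1 > 0}

/-- h(x) = ((4-|x|²)/(|x|²+4x₂+4), 4x₁/(|x|²+4x₂+4)). -/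
def hHP (x : E2) : E2 := !₂[(4 - ‖x‖ ^ 2) / (‖x‖ ^ 2 + 4 * x 1 + 4), 4 * x 0 / (‖x‖ ^ 2 + 4 * x 1 + 4)]

/-- w(x) = (2x₁x₂, x₂²-x₁²-4). -/
def wH (x : E2) : E2 := !₂[2 * x 0 * x 1, x 1 ^ 2 - x 0 ^ 2 - 4]

/-- The Finsler-Poincaré metric on the upper half plane. -/
def FH (x v : E2) : ℝ := ‖v‖ / x 1 + (inner ℝ (wH x) v : ℝ) / (x 1 * (4 + ‖x‖ ^ 2))

/-- The Finsler-Poincaré metric on the disk. -/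
def FP (x v : E2) : ℝ := 2 * ‖v‖ / (1 - ‖x‖ ^ 2) + 4 * (inner ℝ x v : ℝ) / (1 - ‖x‖ ^ 4)

lemma norm_sq_two (y : E2) : ‖y‖ ^ 2 = y 0 ^ 2 + y 1 ^ 2 := by
  rw [EuclideanSpace.norm_eq, Real.sq_sqrt (by positivity)]
  simp [Fin.sum_univ_two, sq_abs]

lemma inner_two (y z : E2) : (inner ℝ y z : ℝ) = y 0 * z 0 + y 1 * z 1 := by
  simp [PiLp.inner_apply, Fin.sum_univ_two, mul_comm]

set_option maxHeartbeats 2000000 in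
open EuclideanSpace in
lemma hHP_hasFDeriv (x : E2) (hb : 0 < x 1) :
    HasFDerivAt hHP
      ((EuclideanSpace.equiv (Fin 2) ℝ).symm.toContinuousLinearMap.comp
        (ContinuousLinearMap.pi
          ![(-8 * x 0 * (x 1 + 2) / (x 0 ^ 2 + (x 1 + 2) ^ 2) ^ 2) • (proj (0:Fin 2) : E2 →L[ℝ] ℝ)
              + (4 * (x 0 ^ 2 - (x 1 + 2) ^ 2) / (x 0 ^ 2 + (x 1 + 2) ^ 2) ^ 2) • (proj (1:Fin 2) : E2 →L[ℝ] ℝ),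
            (4 * ((x 1 + 2) ^ 2 - x 0 ^ 2) / (x 0 ^ 2 + (x 1 + 2) ^ 2) ^ 2) • (proj (0:Fin 2) : E2 →L[ℝ] ℝ)
              + (-8 * x 0 * (x 1 + 2) / (x 0 ^ 2 + (x 1 + 2) ^ 2) ^ 2) • (proj (1:Fin 2) : E2 →L[ℝ] ℝ)])) x := by
  have hD : x 0 ^ 2 + (x 1 + 2) ^ 2 ≠ 0 := by positivity
  have h0 : HasFDerivAt (fun y : E2 => y 0) ((proj (0:Fin 2) : E2 →L[ℝ] ℝ)) x :=
    (proj (0:Fin 2) : E2 →L[ℝ] ℝ).hasFDerivAt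
  have h1 : HasFDerivAt (fun y : E2 => y 1) ((proj (1:Fin 2) : E2 →L[ℝ] ℝ)) x :=
    (proj (1:Fin 2) : E2 →L[ℝ] ℝ).hasFDerivAt
  have hd : (x 0 * x 0 + x 1 * x 1 + 4 * x 1 + 4) ≠ 0 := by nlinarith
  have hden := (((h0.mul h0).add (h1.mul h1)).add (h1.const_mul 4)).add_const 4
  have hinv := (hasFDerivAt_inv' (𝕜 := ℝ) hd).comp x hden
  have he : x 0 * x 0 + x 1 * x 1 + 4 * x 1 + 4 = x 0 ^ 2 + (x 1 + 2) ^ 2 := by ring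
  have hF1 : HasFDerivAt (fun y : E2 => (4 - (y 0 * y 0 + y 1 * y 1)) * (y 0 * y 0 + y 1 * y 1 + 4 * y 1 + 4)⁻¹)
      ((-8 * x 0 * (x 1 + 2) / (x 0 ^ 2 + (x 1 + 2) ^ 2) ^ 2) • (proj (0:Fin 2) : E2 →L[ℝ] ℝ)
        + (4 * (x 0 ^ 2 - (x 1 + 2) ^ 2) / (x 0 ^ 2 + (x 1 + 2) ^ 2) ^ 2) • (proj (1:Fin 2) : E2 →L[ℝ] ℝ)) x := by
    have hnum := ((h0.mul h0).add (h1.mul h1)).const_sub 4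
    refine (hnum.mul hinv).congr_fderiv ?_
    ext v
    simp [ContinuousLinearMap.smul_apply, ContinuousLinearMap.mulLeftRight_apply]
    rw [he]; field_simp; ring
  have hF2 : HasFDerivAt (fun y : E2 => 4 * y 0 * (y 0 * y 0 + y 1 * y 1 + 4 * y 1 + 4)⁻¹)
      ((4 * ((x 1 + 2) ^ 2 - x 0 ^ 2) / (x 0 ^ 2 + (x 1 + 2) ^ 2) ^ 2) • (proj (0:Fin 2) : E2 →L[ℝ] ℝ)
        + (-8 * x 0 * (x 1 + 2) / (x 0 ^ 2 + (x 1 + 2) ^ 2) ^ 2) • (proj (1:Fin 2) : E2 →L[ℝ] ℝ)) x := by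
    have hnum := h0.const_mul 4
    refine (hnum.mul hinv).congr_fderiv ?_
    ext v
    simp [ContinuousLinearMap.smul_apply, ContinuousLinearMap.mulLeftRight_apply]
    rw [he]; field_simp; ring
  have hrw : hHP = fun y : E2 => (EuclideanSpace.equiv (Fin 2) ℝ).symm
      ![(4 - (y 0 * y 0 + y 1 * y 1)) * (y 0 * y 0 + y 1 * y 1 + 4 * y 1 + 4)⁻¹,
        4 * y 0 * (y 0 * y 0 + y 1 * y 1 + 4 * y 1 + 4)⁻¹] := by
    funext y
    have hy := norm_sq_two y
    simp only [hHP, EuclideanSpace.equiv, ContinuousLinearEquiv.symm_apply_apply]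
    refine congrArg₂ (fun u v => (!₂[u, v] : E2)) ?_ ?_ <;>
      · rw [hy, div_eq_mul_inv]; ring_nf
  rw [hrw]
  refine HasFDerivAt.comp x ((EuclideanSpace.equiv (Fin 2) ℝ).symm.toContinuousLinearMap.hasFDerivAt) ?_
  refine hasFDerivAt_pi'' ?_
  intro i
  fin_cases i <;> simp only [ContinuousLinearMap.proj_pi, Fin.isValue, Matrix.cons_val_zero,
    Matrix.cons_val_one, Matrix.head_cons, Fin.zero_eta, Fin.mk_one]
  · exact hF1
  · exact hF2

set_option maxHeartbeats 2000000 in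
theorem hHP_isometry (x : E2) (hx : x ∈ Hset) (v : E2) :
    FH x v = FP (hHP x) (fderiv ℝ hHP x v) := by
  have hb : 0 < x 1 := hx
  have hL := hHP_hasFDeriv x hb
  rw [hL.fderiv]
  set u := ((EuclideanSpace.equiv (Fin 2) ℝ).symm.toContinuousLinearMap.comp
    (ContinuousLinearMap.pi
      ![(-8 * x 0 * (x 1 + 2) / (x 0 ^ 2 + (x 1 + 2) ^ 2) ^ 2) • (EuclideanSpace.proj (0:Fin 2) : E2 →L[ℝ] ℝ)
          + (4 * (x 0 ^ 2 - (x 1 + 2) ^ 2) / (x 0 ^ 2 + (x 1 + 2) ^ 2) ^ 2) • (EuclideanSpace.proj (1:Fin 2) : E2 →L[ℝ] ℝ),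
        (4 * ((x 1 + 2) ^ 2 - x 0 ^ 2) / (x 0 ^ 2 + (x 1 + 2) ^ 2) ^ 2) • (EuclideanSpace.proj (0:Fin 2) : E2 →L[ℝ] ℝ)
          + (-8 * x 0 * (x 1 + 2) / (x 0 ^ 2 + (x 1 + 2) ^ 2) ^ 2) • (EuclideanSpace.proj (1:Fin 2) : E2 →L[ℝ] ℝ)])) v
    with hudef
  have hD : (0:ℝ) < x 0 ^ 2 + (x 1 + 2) ^ 2 := by positivity
  have hDne : x 0 ^ 2 + (x 1 + 2) ^ 2 ≠ 0 := ne_of_gt hD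
  have hu0 : u 0 = -8 * x 0 * (x 1 + 2) / (x 0 ^ 2 + (x 1 + 2) ^ 2) ^ 2 * v 0
      + 4 * (x 0 ^ 2 - (x 1 + 2) ^ 2) / (x 0 ^ 2 + (x 1 + 2) ^ 2) ^ 2 * v 1 := by
    simp [hudef, ContinuousLinearMap.smul_apply]
  have hu1 : u 1 = 4 * ((x 1 + 2) ^ 2 - x 0 ^ 2) / (x 0 ^ 2 + (x 1 + 2) ^ 2) ^ 2 * v 0
      + -8 * x 0 * (x 1 + 2) / (x 0 ^ 2 + (x 1 + 2) ^ 2) ^ 2 * v 1 := by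
    simp [hudef, ContinuousLinearMap.smul_apply]
  have hex : ‖x‖ ^ 2 + 4 * x 1 + 4 = x 0 ^ 2 + (x 1 + 2) ^ 2 := by rw [norm_sq_two]; ring
  have hh0 : hHP x 0 = (4 - (x 0 ^ 2 + x 1 ^ 2)) / (x 0 ^ 2 + (x 1 + 2) ^ 2) := by
    simp [hHP, norm_sq_two]
    congr 1
    ring
  have hh1 : hHP x 1 = 4 * x 0 / (x 0 ^ 2 + (x 1 + 2) ^ 2) := by
    simp [hHP, norm_sq_two]
    congr 1
    ring
  have hnu : ‖u‖ = 4 / (x 0 ^ 2 + (x 1 + 2) ^ 2) * ‖v‖ := by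
    have h2 : ‖u‖ ^ 2 = (4 / (x 0 ^ 2 + (x 1 + 2) ^ 2) * ‖v‖) ^ 2 := by
      rw [norm_sq_two u, hu0, hu1, mul_pow, norm_sq_two v]
      field_simp
      ring
    have : ‖u‖ = Real.sqrt (‖u‖ ^ 2) := (Real.sqrt_sq (norm_nonneg u)).symm
    rw [this, h2, Real.sqrt_sq (by positivity)]
  have e1 : 1 - ‖hHP x‖ ^ 2 = 8 * x 1 / (x 0 ^ 2 + (x 1 + 2) ^ 2) := by
    rw [norm_sq_two, hh0, hh1]
    field_simp
    ring
  have e2 : 1 - ‖hHP x‖ ^ 4 = 16 * x 1 * (x 0 ^ 2 + x 1 ^ 2 + 4) / (x 0 ^ 2 + (x 1 + 2) ^ 2) ^ 2 := by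
    have : ‖hHP x‖ ^ 4 = (‖hHP x‖ ^ 2) ^ 2 := by ring
    rw [this, norm_sq_two, hh0, hh1]
    field_simp
    ring
  have hbne : x 1 ≠ 0 := ne_of_gt hb
  have hs4 : x 0 ^ 2 + x 1 ^ 2 + 4 ≠ 0 := by positivity
  rw [FH, FP, e1, e2, hnu, inner_two, inner_two, hh0, hh1, hu0, hu1, norm_sq_two x]
  simp only [wH, Matrix.cons_val_zero, Matrix.cons_val_one, Matrix.head_cons]
  field_simp
  ring
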